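/- (Sufficient slack implies fragility-feasibility.) If the total number of items s in the sequence satisfies s ≤ mk - k, then the sequence admits a feasible loading into m stacks of height k, regardless of the types of the items. -/
import Mathlib

inductive Item : Type
  | L : Item
  | H : Item
  deriving DecidableEq, BEq

def FeasibleLoading (m k : ℕ) (b : List Item) : Prop :=
  ∃ f : Fin b.length → Fin m,
    (∀ s : Fin m, (Finset.univ.filter (fun i => f i = s)).card ≤ k) ∧
    (∀ i j : Fin b.length, i < j → f i = f j → b.get i = Item.L → b.get j = Item.L)

/-- number of earlier occurrences of type `ty` before position `i` -/
def cnt (b : List Item) (ty : Item) (i : Fin b.length) : ℕ :=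
  (Finset.univ.filter (fun j : Fin b.length => j < i ∧ b.get j = ty)).card

lemma cnt_le (b : List Item) (ty : Item) (i : Fin b.length) :
    cnt b ty i + 1 ≤ b.length := by
  have hsub : (Finset.univ.filter (fun j : Fin b.length => j < i ∧ b.get j = ty))
      ⊆ Finset.univ.erase i := by
    intro j hj
    simp only [Finset.mem_filter] at hj
    exact Finset.mem_erase.mpr ⟨Fin.ne_of_lt hj.2.1, Finset.mem_univ j⟩
  have h1 := Finset.card_le_card hsub
  have hcard : (Finset.univ.erase i : Finset (Fin b.length)).card = b.length - 1 := by
    rw [Finset.card_erase_of_mem (Finset.mem_univ i)]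
    simp
  have hpos : 0 < b.length := i.pos
  unfold cnt
  omega

lemma cnt_strict (b : List Item) (ty : Item) (i j : Fin b.length)
    (hij : i < j) (hi : b.get i = ty) : cnt b ty i < cnt b ty j := by
  apply Finset.card_lt_card
  constructor
  · intro x hx
    simp only [Finset.mem_filter] at hx ⊢
    exact ⟨hx.1, lt_trans hx.2.1 hij, hx.2.2⟩
  · intro hsub
    have := hsub (Finset.mem_filter.mpr ⟨Finset.mem_univ i, hij, hi⟩)
    simp only [Finset.mem_filter] at this
    exact lt_irrefl i this.2.1

lemma cnt_pair (b : List Item) (i j : Fin b.length)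
    (hi : b.get i = Item.H) (hj : b.get j = Item.L) :
    cnt b Item.H i + cnt b Item.L j + 2 ≤ b.length := by
  set A := Finset.univ.filter (fun x : Fin b.length => x < i ∧ b.get x = Item.H) with hA
  set B := Finset.univ.filter (fun x : Fin b.length => x < j ∧ b.get x = Item.L) with hB
  have hij : i ≠ j := by
    intro h; rw [h, hj] at hi; exact Item.noConfusion hi
  have hdisj : Disjoint A B := by
    rw [Finset.disjoint_left]
    intro x hx hx'
    simp only [hA, hB, Finset.mem_filter] at hx hx'
    rw [hx.2.2] at hx'; exact Item.noConfusion hx'.2.2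
  have hsub : A ∪ B ⊆ (Finset.univ.erase i).erase j := by
    intro x hx
    rcases Finset.mem_union.mp hx with h | h <;>
      simp only [hA, hB, Finset.mem_filter] at h
    · refine Finset.mem_erase.mpr ⟨?_, Finset.mem_erase.mpr ⟨Fin.ne_of_lt h.2.1, Finset.mem_univ x⟩⟩
      intro hxj; rw [hxj, hj] at h; exact Item.noConfusion h.2.2
    · refine Finset.mem_erase.mpr ⟨Fin.ne_of_lt h.2.1, Finset.mem_erase.mpr ⟨?_, Finset.mem_univ x⟩⟩
      intro hxi; rw [hxi, hi] at h; exact Item.noConfusion h.2.2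
  have h1 := Finset.card_le_card hsub
  rw [Finset.card_union_of_disjoint hdisj] at h1
  have h2 : ((Finset.univ.erase i).erase j : Finset (Fin b.length)).card = b.length - 2 := by
    rw [Finset.card_erase_of_mem, Finset.card_erase_of_mem (Finset.mem_univ i)]
    · simp; omega
    · exact Finset.mem_erase.mpr ⟨Ne.symm hij, Finset.mem_univ j⟩
  rw [hA, hB] at h1
  have hpos : 0 < b.length := i.pos
  have hlen2 : (2:ℕ) ≤ b.length := by
    by_contra h
    have : b.length = 1 := by omega
    have : i = j := Fin.ext (by omega)
    exact hij this
  unfold cnt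
  omega

lemma div_add_div_le (a c k : ℕ) (hk : 0 < k) : a / k + c / k ≤ (a + c) / k := by
  rw [Nat.le_div_iff_mul_le hk, Nat.add_mul]
  exact Nat.add_le_add (Nat.div_mul_le_self a k) (Nat.div_mul_le_self c k)

lemma stacks_disjoint (m k : ℕ) (hk : 0 < k) (b : List Item)
    (hmk : b.length ≤ (m - 1) * k) (i j : Fin b.length)
    (hi : b.get i = Item.H) (hj : b.get j = Item.L) :
    cnt b Item.H i / k ≠ m - 1 - cnt b Item.L j / k := by
  intro heq
  have hc := cnt_pair b i j hi hj
  have hpos : 0 < b.length := i.pos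
  have hm2 : 2 ≤ m := by
    by_contra h
    push_neg at h
    have hz : m - 1 = 0 := by omega
    rw [hz] at hmk
    simp only [Nat.zero_mul] at hmk
    omega
  have hLlt : cnt b Item.L j / k < m - 1 := by
    rw [Nat.div_lt_iff_lt_mul hk]
    omega
  have hsum : cnt b Item.H i / k + cnt b Item.L j / k
      ≤ (cnt b Item.H i + cnt b Item.L j) / k := div_add_div_le _ _ _ hk
  have hlt : (cnt b Item.H i + cnt b Item.L j) / k < m - 1 := by
    rw [Nat.div_lt_iff_lt_mul hk]
    omega
  omega

lemma card_bound (m k : ℕ) (hk : 0 < k) (b : List Item) (ty : Item) (c : ℕ)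
    (F : Finset (Fin b.length))
    (h : ∀ i ∈ F, b.get i = ty ∧ cnt b ty i / k = c) : F.card ≤ k := by
  have hinj : Set.InjOn (fun i => cnt b ty i) F := by
    intro i hi j hj hgeq
    by_contra hne
    rcases lt_trichotomy i j with h' | h' | h'
    · exact absurd hgeq (Nat.ne_of_lt (cnt_strict b ty i j h' (h i hi).1))
    · exact hne h'
    · exact absurd hgeq.symm (Nat.ne_of_lt (cnt_strict b ty j i h' (h j hj).1))
  have himg : F.image (fun i => cnt b ty i) ⊆ Finset.Ico (c * k) (c * k + k) := by
    intro x hx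
    rcases Finset.mem_image.mp hx with ⟨i, hiF, rfl⟩
    have hdiv := (h i hiF).2
    rw [Finset.mem_Ico]
    constructor
    · calc c * k = cnt b ty i / k * k := by rw [hdiv]
        _ ≤ cnt b ty i := Nat.div_mul_le_self _ _
    · have h2 : cnt b ty i / k < c + 1 := by omega
      rw [Nat.div_lt_iff_lt_mul hk] at h2
      have h3 : (c + 1) * k = c * k + k := by ring
      omega
  calc F.card = (F.image (fun i => cnt b ty i)).card :=
        (Finset.card_image_of_injOn hinj).symm
    _ ≤ (Finset.Ico (c * k) (c * k + k)).card := Finset.card_le_card himg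
    _ = k := by rw [Nat.card_Ico]; omega

theorem stmt13 (m k : ℕ) (hm : 0 < m) (hk : 0 < k) (b : List Item)
    (hs : b.length ≤ m * k - k) :
    FeasibleLoading m k b := by
  classical
  have hmk : b.length ≤ (m - 1) * k := by
    have : (m - 1) * k = m * k - 1 * k := Nat.sub_mul m 1 k
    omega
  -- stack bounds for the two branches
  have hHlt : ∀ i : Fin b.length, cnt b Item.H i / k < m := by
    intro i
    rw [Nat.div_lt_iff_lt_mul hk]
    have h1 := cnt_le b Item.H i
    have h2 : (m - 1) * k ≤ m * k := Nat.mul_le_mul_right k (Nat.sub_le m 1)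
    omega
  have hLle : ∀ i : Fin b.length, m - 1 - cnt b Item.L i / k < m :=
    fun i => lt_of_le_of_lt (Nat.sub_le (m - 1) _) (by omega)
  refine ⟨fun i => if b.get i = Item.H then ⟨cnt b Item.H i / k, hHlt i⟩
      else ⟨m - 1 - cnt b Item.L i / k, hLle i⟩, ?_, ?_⟩
  · intro s
    set f : Fin b.length → Fin m := fun i => if b.get i = Item.H then ⟨cnt b Item.H i / k, hHlt i⟩
      else ⟨m - 1 - cnt b Item.L i / k, hLle i⟩ with hf
    set F := Finset.univ.filter (fun i => f i = s) with hF
    rcases Finset.eq_empty_or_nonempty F with he | ⟨i₀, hi₀⟩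
    · rw [he]; simp
    · have hi₀' : f i₀ = s := (Finset.mem_filter.mp hi₀).2
      -- every element of F has the same type as i₀
      rcases hty : b.get i₀ with hL | hH
      · -- i₀ is L : all of F is L, with cnt L / k = m - 1 - s
        apply card_bound m k hk b Item.L (m - 1 - s.val) F
        intro i hiF
        have hfi : f i = s := (Finset.mem_filter.mp hiF).2
        have hgetL : b.get i = Item.L := by
          rcases hty' : b.get i with _ | _
          · rfl
          · exfalso
            have h1 : f i = ⟨cnt b Item.H i / k, hHlt i⟩ := by
              simp only [hf]; rw [if_pos hty']
            have h2 : f i₀ = ⟨m - 1 - cnt b Item.L i₀ / k, hLle i₀⟩ := by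
              simp only [hf]; rw [if_neg (by rw [hty]; simp)]
            have : cnt b Item.H i / k = m - 1 - cnt b Item.L i₀ / k := by
              have := hfi.trans hi₀'.symm
              rw [h1, h2] at this
              exact congrArg Fin.val this
            exact stacks_disjoint m k hk b hmk i i₀ hty' hty this
        refine ⟨hgetL, ?_⟩
        have h1 : f i = ⟨m - 1 - cnt b Item.L i / k, hLle i⟩ := by
          simp only [hf]; rw [if_neg (by rw [hgetL]; simp)]
        have hval : m - 1 - cnt b Item.L i / k = s.val := by
          rw [h1] at hfi; exact congrArg Fin.val hfi
        have hLsmall : cnt b Item.L i / k < m - 1 ∨ m = 1 := by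
          rcases Nat.eq_or_lt_of_le hm with h | h
          · right; omega
          · left
            rw [Nat.div_lt_iff_lt_mul hk]
            have := cnt_le b Item.L i
            omega
        rcases hLsmall with h | h
        · revert hval h
          generalize cnt b Item.L i / k = x
          intro hval h
          omega
        · -- m = 1 : then b.length = 0, impossible since i exists
          exfalso
          have := i.pos
          have : b.length ≤ 0 := by rw [h] at hmk; simpa using hmk
          omega
      · -- i₀ is H : all of F is H, with cnt H / k = s
        apply card_bound m k hk b Item.H s.val F
        intro i hiF
        have hfi : f i = s := (Finset.mem_filter.mp hiF).2
        have hgetH : b.get i = Item.H := by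
          rcases hty' : b.get i with _ | _
          · exfalso
            have h1 : f i = ⟨m - 1 - cnt b Item.L i / k, hLle i⟩ := by
              simp only [hf]; rw [if_neg (by rw [hty']; simp)]
            have h2 : f i₀ = ⟨cnt b Item.H i₀ / k, hHlt i₀⟩ := by
              simp only [hf]; rw [if_pos hty]
            have : cnt b Item.H i₀ / k = m - 1 - cnt b Item.L i / k := by
              have := hi₀'.trans hfi.symm
              rw [h2, h1] at this
              exact congrArg Fin.val this
            exact stacks_disjoint m k hk b hmk i₀ i hty hty' this
          · rfl
        refine ⟨hgetH, ?_⟩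
        have h1 : f i = ⟨cnt b Item.H i / k, hHlt i⟩ := by
          simp only [hf]; rw [if_pos hgetH]
        rw [h1] at hfi
        exact congrArg Fin.val hfi
  · intro i j hij hfij hiL
    rcases hjty : b.get j with _ | _
    · rfl
    · exfalso
      have hfij' : (if b.get i = Item.H then (⟨cnt b Item.H i / k, hHlt i⟩ : Fin m)
            else ⟨m - 1 - cnt b Item.L i / k, hLle i⟩)
          = (if b.get j = Item.H then (⟨cnt b Item.H j / k, hHlt j⟩ : Fin m)
            else ⟨m - 1 - cnt b Item.L j / k, hLle j⟩) := hfij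
      rw [if_neg (by rw [hiL]; simp), if_pos hjty] at hfij'
      exact stacks_disjoint m k hk b hmk j i hjty hiL (congrArg Fin.val hfij').symm
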